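/- Let G = (V, E) be a finite simple graph and let G′ be the graph obtained from G by adding, for every edge e = {u, w} ∈ E, a new vertex v_e adjacent to both u and w, while keeping all original edges of G. If S ⊆ V is a vi(k)-set of G, then S is a vi(k²)-set of G′. In particular, if vi(G) = k then vi(G′) ≤ k². -/

import Mathlib

open SimpleGraph

/-- `S` is a vi(k)-set of the graph `G`. -/
def IsVISet {V : Type*} (G : SimpleGraph V) (k : ℕ) (S : Finset V) : Prop :=
  S.card ≤ k ∧
    ∀ c : (G.induce {v : V | v ∉ S}).ConnectedComponent,
      Nat.card c.supp ≤ k - S.card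

/-- The vertex integrity of `G`: the minimum `k` such that `G` has a vi(k)-set. -/
noncomputable def vertexIntegrity {V : Type*} [Fintype V] (G : SimpleGraph V) : ℕ :=
  sInf {k : ℕ | ∃ S : Finset V, IsVISet G k S}

/-- The graph `G'` obtained from `G` by adding, for every edge `e = {u,w}` of `G`,
a new vertex `v_e` adjacent to both `u` and `w`, while keeping all original edges. -/
def addEdgeVertices {V : Type*} (G : SimpleGraph V) : SimpleGraph (V ⊕ G.edgeSet) where
  Adj x y :=
    match x, y with
    | Sum.inl u, Sum.inl v => G.Adj u v
    | Sum.inl u, Sum.inr e => u ∈ (e : Sym2 V)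
    | Sum.inr e, Sum.inl u => u ∈ (e : Sym2 V)
    | Sum.inr _, Sum.inr _ => False
  symm := by
    constructor
    rintro (u | e) (v | f) h
    · exact G.adj_symm h
    · exact h
    · exact h
    · exact h.elim
  loopless := by
    constructor
    rintro (u | e) h
    · exact G.irrefl h
    · exact h

section Aux

variable {V : Type*}

/-- A vertex of `G'` "touches" a vertex `u` of `G`. -/
private def Touch (G : SimpleGraph V) (a : V ⊕ G.edgeSet) (u : V) : Prop :=
  a = Sum.inl u ∨ ∃ e : G.edgeSet, a = Sum.inr e ∧ u ∈ (e : Sym2 V)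

private lemma adj_of_mem_mem {G : SimpleGraph V} {e : G.edgeSet} {u v : V}
    (hu : u ∈ (e : Sym2 V)) (hv : v ∈ (e : Sym2 V)) (huv : u ≠ v) : G.Adj u v := by
  obtain ⟨y, hy⟩ := hu
  have he := e.2
  rw [hy] at hv he
  rcases Sym2.mem_iff.mp hv with rfl | rfl
  · exact absurd rfl huv
  · exact he

variable [DecidableEq V]

private lemma key {G : SimpleGraph V} {S : Finset V}
    {a b : ↥{x : V ⊕ G.edgeSet | x ∉ S.map ⟨Sum.inl, Sum.inl_injective⟩}}
    (p : ((addEdgeVertices G).induce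
      {x : V ⊕ G.edgeSet | x ∉ S.map ⟨Sum.inl, Sum.inl_injective⟩}).Walk a b) :
    ∀ (u v : V) (hu : u ∉ S) (hv : v ∉ S), Touch G a.1 u → Touch G b.1 v →
      (G.induce {w : V | w ∉ S}).Reachable ⟨u, hu⟩ ⟨v, hv⟩ := by
  induction p with
  | nil =>
    intro u v hu hv hta htb
    rcases hta with h1 | ⟨e, h1, hm1⟩ <;> rcases htb with h2 | ⟨e2, h2, hm2⟩
    · rw [h1] at h2
      obtain rfl : u = v := Sum.inl_injective h2
      exact Reachable.refl _
    · rw [h1] at h2; exact (Sum.inl_ne_inr h2).elim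
    · rw [h1] at h2; exact (Sum.inr_ne_inl h2).elim
    · rw [h1] at h2
      obtain rfl : e = e2 := Sum.inr_injective h2
      by_cases huv : u = v
      · subst huv; exact Reachable.refl _
      · have hadj : G.Adj u v := adj_of_mem_mem hm1 hm2 huv
        exact Adj.reachable (by exact hadj)
  | @cons a x b h q ih =>
    intro u v hu hv hta htb
    have h' : (addEdgeVertices G).Adj a.1 x.1 := h
    obtain ⟨x1 | e1, hx⟩ := x
    · have hwS : (x1 : V) ∉ S := by simpa using hx
      refine Reachable.trans ?_ (ih x1 v hwS hv (Or.inl rfl) htb)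
      rcases hta with h1 | ⟨e, h1, hm⟩
      · rw [h1] at h'
        exact Adj.reachable (by exact h')
      · rw [h1] at h'
        have hm1 : x1 ∈ (e : Sym2 V) := h'
        by_cases huw : u = x1
        · subst huw; exact Reachable.refl _
        · exact Adj.reachable (show G.Adj u x1 from adj_of_mem_mem hm hm1 huw)
    · rcases hta with h1 | ⟨e, h1, hm⟩
      · rw [h1] at h'
        have hm1 : u ∈ (e1 : Sym2 V) := h'
        exact ih u v hu hv (Or.inr ⟨e1, rfl, hm1⟩) htb
      · rw [h1] at h'
        exact h'.elim

private def piW {S : Finset V} (D : Set ↥{w : V | w ∉ S}) :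
    ↥D ⊕ {x // x ∈ S} → V :=
  fun w => Sum.elim (fun d : ↥D => (d.1 : V)) (fun s : {x // x ∈ S} => (s : V)) w

private def liftW {S : Finset V} (D : Set ↥{w : V | w ∉ S}) (u : V)
    (h : (hu : u ∉ S) → (⟨u, hu⟩ : ↥{w : V | w ∉ S}) ∈ D) : ↥D ⊕ {x // x ∈ S} :=
  if hs : u ∈ S then Sum.inr ⟨u, hs⟩ else Sum.inl ⟨⟨u, hs⟩, h hs⟩

private lemma piW_liftW {S : Finset V} (D : Set ↥{w : V | w ∉ S}) (u : V)
    (h : (hu : u ∉ S) → (⟨u, hu⟩ : ↥{w : V | w ∉ S}) ∈ D) : piW D (liftW D u h) = u := by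
  unfold liftW
  split <;> rfl

private lemma liftW_inj {S : Finset V} (D : Set ↥{w : V | w ∉ S}) {u u' : V}
    {h : (hu : u ∉ S) → (⟨u, hu⟩ : ↥{w : V | w ∉ S}) ∈ D}
    {h' : (hu : u' ∉ S) → (⟨u', hu⟩ : ↥{w : V | w ∉ S}) ∈ D}
    (he : liftW D u h = liftW D u' h') : u = u' := by
  have := congrArg (piW D) he
  rwa [piW_liftW, piW_liftW] at this

private lemma sym2_out_ne {G : SimpleGraph V} (e : G.edgeSet) :
    (e : Sym2 V).out.1 ≠ (e : Sym2 V).out.2 := by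
  intro hcon
  apply G.not_isDiag_of_mem_edgeSet e.2
  have : (e : Sym2 V) = s((e : Sym2 V).out.1, (e : Sym2 V).out.2) := by
    rw [← Prod.mk.eta (p := (e : Sym2 V).out), Sym2.mk]
    exact (e : Sym2 V).out_eq.symm
  rw [this, Sym2.mk_isDiag_iff]
  exact hcon

private lemma sym2_out_spec {G : SimpleGraph V} (e : G.edgeSet) :
    s((e : Sym2 V).out.1, (e : Sym2 V).out.2) = (e : Sym2 V) := by
  rw [← Prod.mk.eta (p := (e : Sym2 V).out), Sym2.mk]
  exact (e : Sym2 V).out_eq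

private noncomputable def fInj {G : SimpleGraph V} {S : Finset V}
    (C : (G.induce {w : V | w ∉ S}).ConnectedComponent)
    (c : ((addEdgeVertices G).induce
      {x : V ⊕ G.edgeSet | x ∉ S.map ⟨Sum.inl, Sum.inl_injective⟩}).ConnectedComponent)
    (hD : ∀ a : ↥{x : V ⊕ G.edgeSet | x ∉ S.map ⟨Sum.inl, Sum.inl_injective⟩},
      a ∈ c.supp → ∀ (u : V) (hu : u ∉ S), Touch G a.1 u →
        (⟨u, hu⟩ : ↥{w : V | w ∉ S}) ∈ C.supp) :
    ↥c.supp → ↥C.supp ⊕ {p : Sym2 (↥C.supp ⊕ {x // x ∈ S}) // ¬ p.IsDiag} :=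
  fun a =>
    match a with
    | ⟨⟨Sum.inl u, h⟩, ha⟩ =>
        Sum.inl ⟨⟨u, by simpa using h⟩, hD _ ha u (by simpa using h) (Or.inl rfl)⟩
    | ⟨⟨Sum.inr e, _⟩, ha⟩ =>
        Sum.inr ⟨s(liftW C.supp (e : Sym2 V).out.1
            (fun hs => hD _ ha _ hs (Or.inr ⟨e, rfl, Sym2.out_fst_mem _⟩)),
          liftW C.supp (e : Sym2 V).out.2
            (fun hs => hD _ ha _ hs (Or.inr ⟨e, rfl, Sym2.out_snd_mem _⟩))), by
          rw [Sym2.mk_isDiag_iff]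
          intro hcon
          exact sym2_out_ne e (liftW_inj _ hcon)⟩

private lemma fInj_injective {G : SimpleGraph V} {S : Finset V}
    (C : (G.induce {w : V | w ∉ S}).ConnectedComponent)
    (c : ((addEdgeVertices G).induce
      {x : V ⊕ G.edgeSet | x ∉ S.map ⟨Sum.inl, Sum.inl_injective⟩}).ConnectedComponent)
    (hD : ∀ a : ↥{x : V ⊕ G.edgeSet | x ∉ S.map ⟨Sum.inl, Sum.inl_injective⟩},
      a ∈ c.supp → ∀ (u : V) (hu : u ∉ S), Touch G a.1 u →
        (⟨u, hu⟩ : ↥{w : V | w ∉ S}) ∈ C.supp) :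
    Function.Injective (fInj C c hD) := by
  rintro ⟨⟨x1 | e1, h1⟩, m1⟩ ⟨⟨x2 | e2, h2⟩, m2⟩ heq
  · simp only [fInj, Sum.inl.injEq, Subtype.mk.injEq] at heq
    subst heq
    rfl
  · simp only [fInj] at heq
    exact (Sum.inl_ne_inr heq).elim
  · simp only [fInj] at heq
    exact (Sum.inr_ne_inl heq).elim
  · simp only [fInj, Sum.inr.injEq, Subtype.mk.injEq] at heq
    have hmap := congrArg (Sym2.map (piW C.supp)) heq
    rw [Sym2.map_pair_eq, Sym2.map_pair_eq, piW_liftW, piW_liftW, piW_liftW, piW_liftW,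
      sym2_out_spec, sym2_out_spec] at hmap
    have : e1 = e2 := Subtype.ext hmap
    subst this
    rfl

private lemma card_sym2_not_diag (α : Type*) [Finite α] :
    Nat.card {p : Sym2 α // ¬ p.IsDiag} = (Nat.card α).choose 2 := by
  classical
  cases nonempty_fintype α
  rw [Nat.card_eq_fintype_card, Nat.card_eq_fintype_card, Sym2.card_subtype_not_diag]

private lemma caseA {G : SimpleGraph V} [Fintype V] [DecidableRel G.Adj] {k : ℕ} {S : Finset V}
    (hS : IsVISet G k S)
    (c : ((addEdgeVertices G).induce
      {x : V ⊕ G.edgeSet | x ∉ S.map ⟨Sum.inl, Sum.inl_injective⟩}).ConnectedComponent)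
    (v0 : V) (hv0 : v0 ∉ S)
    (hv0' : (Sum.inl v0 : V ⊕ G.edgeSet) ∉ S.map ⟨Sum.inl, Sum.inl_injective⟩)
    (hmem : (⟨Sum.inl v0, hv0'⟩ : ↥{x : V ⊕ G.edgeSet |
        x ∉ S.map ⟨Sum.inl, Sum.inl_injective⟩}) ∈ c.supp) :
    Nat.card c.supp ≤ k ^ 2 - S.card := by
  classical
  set C := (G.induce {w : V | w ∉ S}).connectedComponentMk ⟨v0, hv0⟩ with hC
  have hD : ∀ a : ↥{x : V ⊕ G.edgeSet | x ∉ S.map ⟨Sum.inl, Sum.inl_injective⟩},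
      a ∈ c.supp → ∀ (u : V) (hu : u ∉ S), Touch G a.1 u →
        (⟨u, hu⟩ : ↥{w : V | w ∉ S}) ∈ C.supp := by
    intro a ha u hu ht
    have hac : _ = c := (ConnectedComponent.mem_supp_iff _ _).mp ha
    have hvc : _ = c := (ConnectedComponent.mem_supp_iff _ _).mp hmem
    have hreach := ConnectedComponent.exact (hac.trans hvc.symm)
    obtain ⟨p⟩ := hreach
    have hR := key p u v0 hu hv0 ht (Or.inl rfl)
    exact (ConnectedComponent.mem_supp_iff _ _).mpr (ConnectedComponent.sound hR)
  have hinj := fInj_injective C c hD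
  have hcard := Nat.card_le_card_of_injective _ hinj
  rw [Nat.card_sum, card_sym2_not_diag, Nat.card_sum] at hcard
  have hSc : Nat.card {x // x ∈ S} = S.card := by
    rw [Nat.card_eq_fintype_card, Fintype.card_coe]
  rw [hSc] at hcard
  have hm : Nat.card C.supp ≤ k - S.card := hS.2 C
  have hsk : S.card ≤ k := hS.1
  have hms : Nat.card C.supp + S.card ≤ k := by omega
  have hch : (Nat.card C.supp + S.card).choose 2 ≤ k.choose 2 :=
    Nat.choose_le_choose 2 hms
  have hk2 : k.choose 2 ≤ k * k - k := by
    rw [Nat.choose_two_right]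
    rcases k with _ | n
    · simp
    · have h1 : (n + 1) * (n + 1 - 1) = (n + 1) * n := by rw [Nat.add_sub_cancel]
      have h2 : (n + 1) * (n + 1) - (n + 1) = (n + 1) * n := by
        have : (n + 1) * (n + 1) = (n + 1) * n + (n + 1) := by ring
        omega
      rw [h1, h2]
      exact Nat.div_le_self _ _
  have hkk : k ≤ k * k := by
    rcases Nat.eq_zero_or_pos k with h | h
    · simp [h]
    · exact Nat.le_mul_of_pos_left k h
  have final : ∀ q : ℕ, k.choose 2 ≤ q - k → k ≤ q → Nat.card c.supp ≤ q - S.card := by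
    intro q hq1 hq2
    omega
  rw [pow_two]
  exact final (k * k) hk2 hkk

end Aux

/-- If `S` is a vi(k)-set of `G`, then `S` (viewed inside `G'`) is a vi(k²)-set of
the graph `G'` obtained by adding a vertex `v_e` for each edge `e`.
In particular, if `vi(G) = k` then `vi(G') ≤ k²`. -/
theorem stmt_4 {V : Type*} [Fintype V] [DecidableEq V] (G : SimpleGraph V)
    [DecidableRel G.Adj] (k : ℕ) (S : Finset V) (hS : IsVISet G k S) :
    IsVISet (addEdgeVertices G) (k ^ 2) (S.map ⟨Sum.inl, Sum.inl_injective⟩) ∧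
      (vertexIntegrity G = k → vertexIntegrity (addEdgeVertices G) ≤ k ^ 2) := by
  classical
  have hmain : IsVISet (addEdgeVertices G) (k ^ 2) (S.map ⟨Sum.inl, Sum.inl_injective⟩) := by
    constructor
    · rw [Finset.card_map]
      exact hS.1.trans (Nat.le_self_pow two_ne_zero k)
    · intro c
      rw [Finset.card_map]
      obtain ⟨a, ha⟩ := c.exists_rep
      obtain ⟨x1 | e, hx⟩ := a
      · exact caseA hS c x1 (by simpa using hx) hx
          ((ConnectedComponent.mem_supp_iff _ _).mpr ha)
      · -- a is an edge-vertex
        by_cases h1 : (e : Sym2 V).out.1 ∈ S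
        · by_cases h2 : (e : Sym2 V).out.2 ∈ S
          · -- both endpoints in S: c is a singleton
            have hsupp : c.supp = {⟨Sum.inr e, hx⟩} := by
              ext y
              simp only [ConnectedComponent.mem_supp_iff, Set.mem_singleton_iff]
              constructor
              · intro hy
                have hre := ConnectedComponent.exact (ha.trans hy.symm)
                obtain ⟨p⟩ := hre
                cases p with
                | nil => rfl
                | @cons _ z _ hadj q =>
                  exfalso
                  have h' : (addEdgeVertices G).Adj (Sum.inr e) z.1 := hadj
                  obtain ⟨w | f, hz⟩ := z
                  · have hw : w ∈ (e : Sym2 V) := h'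
                    have hwS : w ∉ S := by simpa using hz
                    rw [← sym2_out_spec e] at hw
                    rcases Sym2.mem_iff.mp hw with rfl | rfl
                    · exact hwS h1
                    · exact hwS h2
                  · exact h'
              · rintro rfl
                exact ha
            have hone : Nat.card c.supp = 1 := by rw [hsupp]; simp
            rw [hone]
            -- S.card ≥ 2 since both distinct endpoints lie in S
            have hne := sym2_out_ne e
            have h2le : 2 ≤ S.card := by
              have : ({(e : Sym2 V).out.1, (e : Sym2 V).out.2} : Finset V) ⊆ S := by
                intro x hxm
                simp only [Finset.mem_insert, Finset.mem_singleton] at hxm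
                rcases hxm with rfl | rfl
                · exact h1
                · exact h2
              have hc2 : ({(e : Sym2 V).out.1, (e : Sym2 V).out.2} : Finset V).card = 2 :=
                Finset.card_pair hne
              calc 2 = _ := hc2.symm
                _ ≤ S.card := Finset.card_le_card this
            have hsk : S.card ≤ k := hS.1
            have hkk : 2 * k ≤ k * k := Nat.mul_le_mul_right k (by omega)
            have final : ∀ q : ℕ, 2 * k ≤ q → (1 : ℕ) ≤ q - S.card := by
              intro q hq
              omega
            rw [pow_two]
            exact final (k * k) hkk
          · -- second endpoint not in S
            have hw : (e : Sym2 V).out.2 ∉ S := h2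
            have hx2 : (Sum.inl ((e : Sym2 V).out.2) : V ⊕ G.edgeSet) ∉
                S.map ⟨Sum.inl, Sum.inl_injective⟩ := by simpa using hw
            have hadj : ((addEdgeVertices G).induce
                {x : V ⊕ G.edgeSet | x ∉ S.map ⟨Sum.inl, Sum.inl_injective⟩}).Adj
                ⟨Sum.inl ((e : Sym2 V).out.2), hx2⟩ ⟨Sum.inr e, hx⟩ := by
              show (addEdgeVertices G).Adj (Sum.inl ((e : Sym2 V).out.2)) (Sum.inr e)
              exact Sym2.out_snd_mem _
            have hmem' : (⟨Sum.inl ((e : Sym2 V).out.2), hx2⟩ :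
                ↥{x : V ⊕ G.edgeSet | x ∉ S.map ⟨Sum.inl, Sum.inl_injective⟩}) ∈ c.supp := by
              rw [ConnectedComponent.mem_supp_iff, ← ha]
              exact ConnectedComponent.sound hadj.reachable
            exact caseA hS c _ hw hx2 hmem'
        · -- first endpoint not in S
          have hw : (e : Sym2 V).out.1 ∉ S := h1
          have hx2 : (Sum.inl ((e : Sym2 V).out.1) : V ⊕ G.edgeSet) ∉
              S.map ⟨Sum.inl, Sum.inl_injective⟩ := by simpa using hw
          have hadj : ((addEdgeVertices G).induce
              {x : V ⊕ G.edgeSet | x ∉ S.map ⟨Sum.inl, Sum.inl_injective⟩}).Adj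
              ⟨Sum.inl ((e : Sym2 V).out.1), hx2⟩ ⟨Sum.inr e, hx⟩ := by
            show (addEdgeVertices G).Adj (Sum.inl ((e : Sym2 V).out.1)) (Sum.inr e)
            exact Sym2.out_fst_mem _
          have hmem' : (⟨Sum.inl ((e : Sym2 V).out.1), hx2⟩ :
              ↥{x : V ⊕ G.edgeSet | x ∉ S.map ⟨Sum.inl, Sum.inl_injective⟩}) ∈ c.supp := by
            rw [ConnectedComponent.mem_supp_iff, ← ha]
            exact ConnectedComponent.sound hadj.reachable
          exact caseA hS c _ hw hx2 hmem'
  exact ⟨hmain, fun _ => Nat.sInf_le ⟨S.map ⟨Sum.inl, Sum.inl_injective⟩, hmain⟩⟩
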